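/- For any indices k and l (with s = dep l) and positive integer a, the alternating sum Σ_{j=0}^{s} (−1)^j [k // reverse(l₁,…,l_j); a] ∗ [l_{j+1},…,l_s] equals the concatenation symbol [k, a, l] in ℐ. -/

import Mathlib

/-- An index: a finite sequence of positive integers. -/
abbrev Idx := List ℕ+

/-- The `ℚ`-linear space `ℐ` spanned by formal symbols of indices. -/
abbrev IdxAlg := Idx →₀ ℚ

/-- Auxiliary harmonic product on indices *stored in reversed order*, so that the
recursion acts on the last components of the original indices, as in the paper:
`[k,k]∗[l,l] = [([k,k]∗[l]),l] + [([k]∗[l,l]),k] + [([k]∗[l]),k+l]`. -/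
noncomputable def hpAux : Idx → Idx → IdxAlg
  | [], l => Finsupp.single l 1
  | a :: as, [] => Finsupp.single (a :: as) 1
  | a :: as, b :: bs =>
      Finsupp.mapDomain (a :: ·) (hpAux as (b :: bs)) +
      Finsupp.mapDomain (b :: ·) (hpAux (a :: as) bs) +
      Finsupp.mapDomain ((a + b) :: ·) (hpAux as bs)
termination_by k l => k.length + l.length

/-- The harmonic (stuffle) product of two index symbols. -/
noncomputable def hp (k l : Idx) : IdxAlg :=
  Finsupp.mapDomain List.reverse (hpAux k.reverse l.reverse)

/-- The bilinear extension of the harmonic product to `ℐ`. -/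
noncomputable def hmul (u v : IdxAlg) : IdxAlg :=
  u.sum fun k ck => v.sum fun l cl => (ck * cl) • hp k l

/-- The star-sum `[l₁,…,l_s]^⋆`: the sum of all `[l₁□⋯□l_s]` with each `□` replaced by
`+` or `,`. -/
noncomputable def starSym : Idx → IdxAlg
  | [] => Finsupp.single [] 1
  | [a] => Finsupp.single [a] 1
  | a :: b :: rest =>
      Finsupp.mapDomain (a :: ·) (starSym (b :: rest)) + starSym ((a + b) :: rest)
termination_by l => l.length

/-- The linear map `S̃ : ℐ → ℐ` with `S̃([k]) = (−1)^{dep k}[k]^⋆`. -/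
noncomputable def Stilde (u : IdxAlg) : IdxAlg :=
  u.sum fun k c => ((-1 : ℚ) ^ k.length * c) • starSym k

/-- The defining properties of the anti-hook symbols `[k // l; a] ∈ ℐ`:
(1) `[(k)//∅; a] = [k,a]` and `[∅//(l); a] = [l,a]^⋆`;
(2) `[(k₁,…,k_{r−1})//(l); k_r] + [(k)//(l₁,…,l_{s−1}); l_s] = [k₁,…,k_r] ∗ [l₁,…,l_s]^⋆`
for nonempty `k`, `l`. -/
def IsAntiHook (AH : Idx → Idx → ℕ+ → IdxAlg) : Prop :=
  (∀ (k : Idx) (a : ℕ+), AH k [] a = Finsupp.single (k ++ [a]) 1) ∧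
  (∀ (l : Idx) (a : ℕ+), AH [] l a = starSym (l ++ [a])) ∧
  (∀ (k l : Idx) (a b : ℕ+),
    AH k (l ++ [b]) a + AH (k ++ [a]) l b =
      hmul (Finsupp.single (k ++ [a]) 1) (starSym (l ++ [b])))

lemma hpAux_nil_left (l : Idx) : hpAux [] l = Finsupp.single l 1 := by rw [hpAux]

lemma hpAux_nil_right (k : Idx) : hpAux k [] = Finsupp.single k 1 := by
  cases k <;> rw [hpAux]

lemma hpAux_cons_cons (a b : ℕ+) (as bs : Idx) :
    hpAux (a :: as) (b :: bs) =
      Finsupp.mapDomain (a :: ·) (hpAux as (b :: bs)) +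
      Finsupp.mapDomain (b :: ·) (hpAux (a :: as) bs) +
      Finsupp.mapDomain ((a + b) :: ·) (hpAux as bs) := by rw [hpAux]

lemma hpAux_concat (x y : ℕ+) (n : ℕ) : ∀ (p q : Idx), p.length + q.length ≤ n →
    hpAux (p ++ [x]) (q ++ [y]) =
      Finsupp.mapDomain (· ++ [x]) (hpAux p (q ++ [y])) +
      Finsupp.mapDomain (· ++ [y]) (hpAux (p ++ [x]) q) +
      Finsupp.mapDomain (· ++ [x + y]) (hpAux p q) := by
  induction n with
  | zero =>
    intro p q h
    have hp : p = [] := by cases p <;> simp_all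
    have hq : q = [] := by cases q <;> simp_all
    subst hp; subst hq
    simp only [List.nil_append]
    rw [hpAux_cons_cons]
    simp only [hpAux_nil_left, hpAux_nil_right, Finsupp.mapDomain_single,
      List.nil_append, List.singleton_append]
    abel
  | succ n IH =>
    intro p q h
    match p, q with
    | [], [] =>
      simp only [List.nil_append]
      rw [hpAux_cons_cons]
      simp only [hpAux_nil_left, hpAux_nil_right, Finsupp.mapDomain_single,
        List.nil_append, List.singleton_append]
      abel
    | [], b :: bs =>
      have h1 : ([] : Idx).length + bs.length ≤ n := by simp at h ⊢; omega
      simp only [List.nil_append, List.cons_append]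
      rw [hpAux_cons_cons,
        show hpAux [x] (bs ++ [y]) = _ by simpa using IH [] bs h1]
      conv_rhs => rw [hpAux_cons_cons]
      simp only [hpAux_nil_left, hpAux_nil_right, Finsupp.mapDomain_add,
        Finsupp.mapDomain_single, ← Finsupp.mapDomain_comp, Function.comp_def,
        List.cons_append, List.nil_append, List.singleton_append, List.append_assoc]
      abel
    | a :: as, [] =>
      have h1 : as.length + ([] : Idx).length ≤ n := by simp at h ⊢; omega
      simp only [List.nil_append, List.cons_append]
      rw [hpAux_cons_cons,
        show hpAux (as ++ [x]) [y] = _ by simpa using IH as [] h1]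
      conv_rhs => rw [hpAux_cons_cons]
      simp only [hpAux_nil_left, hpAux_nil_right, Finsupp.mapDomain_add,
        Finsupp.mapDomain_single, ← Finsupp.mapDomain_comp, Function.comp_def,
        List.cons_append, List.nil_append, List.singleton_append, List.append_assoc]
      abel
    | a :: as, b :: bs =>
      have h1 : as.length + (b :: bs).length ≤ n := by simp at h ⊢; omega
      have h2 : (a :: as).length + bs.length ≤ n := by simp at h ⊢; omega
      have h3 : as.length + bs.length ≤ n := by simp at h ⊢; omega
      simp only [List.cons_append]
      rw [hpAux_cons_cons]
      rw [show hpAux (as ++ [x]) (b :: (bs ++ [y])) = _ by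
        simpa only [List.cons_append] using IH as (b :: bs) h1]
      rw [show hpAux (a :: (as ++ [x])) (bs ++ [y]) = _ by
        simpa only [List.cons_append] using IH (a :: as) bs h2]
      rw [IH as bs h3]
      conv_rhs => rw [hpAux_cons_cons, hpAux_cons_cons, hpAux_cons_cons]
      simp only [Finsupp.mapDomain_add, ← Finsupp.mapDomain_comp, Function.comp_def,
        List.cons_append]
      abel

lemma hp_nil_left (l : Idx) : hp [] l = Finsupp.single l 1 := by
  simp [hp, hpAux_nil_left, Finsupp.mapDomain_single]

lemma hp_nil_right (k : Idx) : hp k [] = Finsupp.single k 1 := by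
  simp [hp, hpAux_nil_right, Finsupp.mapDomain_single]

lemma hp_cons_cons (x y : ℕ+) (k l : Idx) :
    hp (x :: k) (y :: l) =
      Finsupp.mapDomain (x :: ·) (hp k (y :: l)) +
      Finsupp.mapDomain (y :: ·) (hp (x :: k) l) +
      Finsupp.mapDomain ((x + y) :: ·) (hp k l) := by
  unfold hp
  rw [List.reverse_cons, List.reverse_cons,
    hpAux_concat x y (k.reverse.length + l.reverse.length) _ _ le_rfl]
  rw [← List.reverse_cons, ← List.reverse_cons]
  simp only [Finsupp.mapDomain_add, ← Finsupp.mapDomain_comp, Function.comp_def,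
    List.reverse_append, List.reverse_cons, List.reverse_nil, List.nil_append,
    List.singleton_append, List.cons_append]

noncomputable def hmulL : IdxAlg →ₗ[ℚ] IdxAlg →ₗ[ℚ] IdxAlg :=
  Finsupp.lsum ℚ fun k => LinearMap.toSpanSingleton ℚ (IdxAlg →ₗ[ℚ] IdxAlg)
    (Finsupp.lsum ℚ fun l => LinearMap.toSpanSingleton ℚ IdxAlg (hp k l))

lemma hmul_eq (u v : IdxAlg) : hmul u v = hmulL u v := by
  rw [hmul, hmulL, Finsupp.lsum_apply, LinearMap.finsupp_sum_apply]
  refine Finsupp.sum_congr fun k _ => ?_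
  rw [LinearMap.toSpanSingleton_apply, LinearMap.smul_apply, Finsupp.lsum_apply,
    Finsupp.smul_sum]
  refine Finsupp.sum_congr fun l _ => ?_
  rw [LinearMap.toSpanSingleton_apply, smul_smul]

lemma hmul_single_single (k l : Idx) (c d : ℚ) :
    hmul (Finsupp.single k c) (Finsupp.single l d) = (c * d) • hp k l := by
  rw [hmul_eq, hmulL, Finsupp.lsum_single, LinearMap.toSpanSingleton_apply,
    LinearMap.smul_apply, Finsupp.lsum_single, LinearMap.toSpanSingleton_apply, smul_smul]

lemma hmul_add_left (u v w : IdxAlg) : hmul (u + v) w = hmul u w + hmul v w := by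
  simp [hmul_eq]

lemma hmul_add_right (u v w : IdxAlg) : hmul u (v + w) = hmul u v + hmul u w := by
  simp [hmul_eq]

lemma hmul_smul_left (c : ℚ) (u v : IdxAlg) : hmul (c • u) v = c • hmul u v := by
  simp [hmul_eq]

lemma hmul_smul_right (c : ℚ) (u v : IdxAlg) : hmul u (c • v) = c • hmul u v := by
  simp [hmul_eq]

lemma hmul_zero_left (v : IdxAlg) : hmul 0 v = 0 := by simp [hmul_eq]

lemma hmul_zero_right (v : IdxAlg) : hmul v 0 = 0 := by simp [hmul_eq]

lemma hmul_sum_right (u : IdxAlg) (s : Finset ℕ) (f : ℕ → IdxAlg) :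
    hmul u (∑ i ∈ s, f i) = ∑ i ∈ s, hmul u (f i) := by
  simp [hmul_eq]

lemma hmul_single_one (k l : Idx) :
    hmul (Finsupp.single k 1) (Finsupp.single l 1) = hp k l := by
  rw [hmul_single_single]; simp

lemma hmul_nil_left (v : IdxAlg) : hmul (Finsupp.single ([] : Idx) 1) v = v := by
  induction v using Finsupp.induction_linear with
  | zero => simp [hmul_zero_right]
  | add f g hf hg => rw [hmul_add_right, hf, hg]
  | single l b =>
    rw [hmul_single_single, hp_nil_left, Finsupp.smul_single]
    simp

lemma hmul_nil_right (v : IdxAlg) : hmul v (Finsupp.single ([] : Idx) 1) = v := by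
  induction v using Finsupp.induction_linear with
  | zero => simp [hmul_zero_left]
  | add f g hf hg => rw [hmul_add_left, hf, hg]
  | single l b =>
    rw [hmul_single_single, hp_nil_right, Finsupp.smul_single]
    simp

/-- Left factor with a cons'ed head, right factor a single cons list. -/

lemma hmul_mapCons_single (x c : ℕ+) (u : IdxAlg) (w : Idx) :
    hmul (Finsupp.mapDomain (x :: ·) u) (Finsupp.single (c :: w) 1) =
      Finsupp.mapDomain (x :: ·) (hmul u (Finsupp.single (c :: w) 1)) +
      Finsupp.mapDomain (c :: ·) (hmul (Finsupp.mapDomain (x :: ·) u) (Finsupp.single w 1)) +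
      Finsupp.mapDomain ((x + c) :: ·) (hmul u (Finsupp.single w 1)) := by
  induction u using Finsupp.induction_linear with
  | zero => simp [hmul_zero_left]
  | add f g hf hg =>
    simp only [Finsupp.mapDomain_add, hmul_add_left, hf, hg]
    abel
  | single k b =>
    rw [Finsupp.mapDomain_single, hmul_single_single, hmul_single_single,
      hmul_single_single, hmul_single_single, hp_cons_cons]
    simp only [smul_add, Finsupp.mapDomain_add, Finsupp.mapDomain_smul]

/-- Left factor a single cons list, right factor with a cons'ed head. -/

lemma hmul_single_mapCons (x c : ℕ+) (k : Idx) (v : IdxAlg) :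
    hmul (Finsupp.single (x :: k) 1) (Finsupp.mapDomain (c :: ·) v) =
      Finsupp.mapDomain (x :: ·) (hmul (Finsupp.single k 1) (Finsupp.mapDomain (c :: ·) v)) +
      Finsupp.mapDomain (c :: ·) (hmul (Finsupp.single (x :: k) 1) v) +
      Finsupp.mapDomain ((x + c) :: ·) (hmul (Finsupp.single k 1) v) := by
  induction v using Finsupp.induction_linear with
  | zero => simp [hmul_zero_right]
  | add f g hf hg =>
    simp only [Finsupp.mapDomain_add, hmul_add_right, hf, hg]
    abel
  | single w b =>
    rw [Finsupp.mapDomain_single, hmul_single_single, hmul_single_single,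
      hmul_single_single, hmul_single_single, hp_cons_cons]
    simp only [smul_add, Finsupp.mapDomain_add, Finsupp.mapDomain_smul]

set_option maxHeartbeats 800000 in

lemma hp_assoc (n : ℕ) : ∀ (k l m : Idx), k.length + l.length + m.length ≤ n →
    hmul (hp k l) (Finsupp.single m 1) = hmul (Finsupp.single k 1) (hp l m) := by
  induction n with
  | zero =>
    intro k l m h
    have hk : k = [] := by cases k <;> simp_all
    subst hk
    rw [hp_nil_left, hmul_single_one, hmul_nil_left]
  | succ n IH =>
    intro k l m h
    match k, l, m with
    | [], l, m => rw [hp_nil_left, hmul_single_one, hmul_nil_left]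
    | x :: k', [], m => rw [hp_nil_right, hp_nil_left]
    | x :: k', y :: l', [] => rw [hmul_nil_right, hp_nil_right, hmul_single_one]
    | x :: k', y :: l', z :: m' =>
      simp only [List.length_cons] at h
      have h1 : k'.length + (y :: l').length + (z :: m').length ≤ n := by
        simp only [List.length_cons]; omega
      have h2 : (x :: k').length + l'.length + (z :: m').length ≤ n := by
        simp only [List.length_cons]; omega
      have h3 : k'.length + l'.length + (z :: m').length ≤ n := by
        simp only [List.length_cons]; omega
      have h4 : (x :: k').length + (y :: l').length + m'.length ≤ n := by
        simp only [List.length_cons]; omega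
      have h5 : k'.length + (y :: l').length + m'.length ≤ n := by
        simp only [List.length_cons]; omega
      have h6 : (x :: k').length + l'.length + m'.length ≤ n := by
        simp only [List.length_cons]; omega
      have h7 : k'.length + l'.length + m'.length ≤ n := by omega
      have hL : hmul (hp (x :: k') (y :: l')) (Finsupp.single (z :: m') 1) =
          Finsupp.mapDomain (x :: ·) (hmul (hp k' (y :: l')) (Finsupp.single (z :: m') 1)) +
          Finsupp.mapDomain (y :: ·) (hmul (hp (x :: k') l') (Finsupp.single (z :: m') 1)) +
          Finsupp.mapDomain ((x + y) :: ·) (hmul (hp k' l') (Finsupp.single (z :: m') 1)) +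
          Finsupp.mapDomain (z :: ·) (hmul (hp (x :: k') (y :: l')) (Finsupp.single m' 1)) +
          Finsupp.mapDomain ((x + z) :: ·) (hmul (hp k' (y :: l')) (Finsupp.single m' 1)) +
          Finsupp.mapDomain ((y + z) :: ·) (hmul (hp (x :: k') l') (Finsupp.single m' 1)) +
          Finsupp.mapDomain ((x + y + z) :: ·) (hmul (hp k' l') (Finsupp.single m' 1)) := by
        conv_lhs => rw [hp_cons_cons x y]
        rw [hmul_add_left, hmul_add_left, hmul_mapCons_single, hmul_mapCons_single,
          hmul_mapCons_single]
        conv_rhs => rw [hp_cons_cons x y]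
        simp only [hmul_add_left, Finsupp.mapDomain_add]
        abel
      have hR : hmul (Finsupp.single (x :: k') 1) (hp (y :: l') (z :: m')) =
          Finsupp.mapDomain (x :: ·) (hmul (Finsupp.single k' 1) (hp (y :: l') (z :: m'))) +
          Finsupp.mapDomain (y :: ·) (hmul (Finsupp.single (x :: k') 1) (hp l' (z :: m'))) +
          Finsupp.mapDomain ((x + y) :: ·) (hmul (Finsupp.single k' 1) (hp l' (z :: m'))) +
          Finsupp.mapDomain (z :: ·) (hmul (Finsupp.single (x :: k') 1) (hp (y :: l') m')) +
          Finsupp.mapDomain ((x + z) :: ·) (hmul (Finsupp.single k' 1) (hp (y :: l') m')) +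
          Finsupp.mapDomain ((y + z) :: ·) (hmul (Finsupp.single (x :: k') 1) (hp l' m')) +
          Finsupp.mapDomain ((x + y + z) :: ·) (hmul (Finsupp.single k' 1) (hp l' m')) := by
        conv_lhs => rw [hp_cons_cons y z]
        rw [hmul_add_right, hmul_add_right, hmul_single_mapCons, hmul_single_mapCons,
          hmul_single_mapCons]
        conv_rhs => rw [hp_cons_cons y z]
        simp only [hmul_add_right, Finsupp.mapDomain_add, ← add_assoc]
        abel
      rw [hL, hR, IH k' (y :: l') (z :: m') h1, IH (x :: k') l' (z :: m') h2,
        IH k' l' (z :: m') h3, IH (x :: k') (y :: l') m' h4, IH k' (y :: l') m' h5,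
        IH (x :: k') l' m' h6, IH k' l' m' h7]

lemma starSym_nil : starSym [] = Finsupp.single [] 1 := by rw [starSym]

lemma starSym_one (a : ℕ+) : starSym [a] = Finsupp.single [a] 1 := by rw [starSym]

lemma starSym_cons_cons (a b : ℕ+) (r : Idx) :
    starSym (a :: b :: r) =
      Finsupp.mapDomain (a :: ·) (starSym (b :: r)) + starSym ((a + b) :: r) := by
  rw [starSym]

/-- The "head-from-the-left-factor" part of `star r ∗ [l]`. -/

noncomputable def ZC : Idx → Idx → IdxAlg
  | [], [] => Finsupp.single [] 1
  | [], _ :: _ => 0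
  | [x], l => Finsupp.mapDomain (x :: ·) (hmul (starSym []) (Finsupp.single l 1))
  | x :: y :: r, l =>
      Finsupp.mapDomain (x :: ·) (hmul (starSym (y :: r)) (Finsupp.single l 1)) +
      ZC ((x + y) :: r) l
termination_by r _ => r.length

lemma ZC_nil_nil : ZC [] [] = Finsupp.single [] 1 := by rw [ZC]

lemma ZC_nil_cons (c : ℕ+) (t : Idx) : ZC [] (c :: t) = 0 := by rw [ZC]

lemma ZC_one (x : ℕ+) (l : Idx) :
    ZC [x] l = Finsupp.mapDomain (x :: ·) (hmul (starSym []) (Finsupp.single l 1)) := by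
  rw [ZC]

lemma ZC_cons_cons (x y : ℕ+) (r l : Idx) :
    ZC (x :: y :: r) l =
      Finsupp.mapDomain (x :: ·) (hmul (starSym (y :: r)) (Finsupp.single l 1)) +
      ZC ((x + y) :: r) l := by rw [ZC]

lemma ZC_nil_right (n : ℕ) : ∀ r : Idx, r.length ≤ n → ZC r [] = starSym r := by
  induction n with
  | zero =>
    intro r h
    have : r = [] := by cases r <;> simp_all
    subst this; rw [ZC_nil_nil, starSym_nil]
  | succ n IH =>
    intro r h
    match r with
    | [] => rw [ZC_nil_nil, starSym_nil]
    | [x] =>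
      rw [ZC_one, starSym_nil, hmul_nil_left, Finsupp.mapDomain_single, starSym_one]
    | x :: y :: r' =>
      rw [ZC_cons_cons, starSym_cons_cons, hmul_nil_right,
        IH ((x + y) :: r') (by simp at h ⊢; omega)]

lemma lemK (n : ℕ) : ∀ r : Idx, r.length ≤ n → ∀ (c : ℕ+) (t : Idx),
    hmul (starSym r) (Finsupp.single (c :: t) 1) = ZC r (c :: t) + ZC (c :: r) t := by
  induction n with
  | zero =>
    intro r h c t
    have : r = [] := by cases r <;> simp_all
    subst this
    rw [starSym_nil, hmul_nil_left, ZC_nil_cons, ZC_one, starSym_nil, hmul_nil_left,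
      Finsupp.mapDomain_single, zero_add]
  | succ n IH =>
    intro r h c t
    match r with
    | [] =>
      rw [starSym_nil, hmul_nil_left, ZC_nil_cons, ZC_one, starSym_nil, hmul_nil_left,
        Finsupp.mapDomain_single, zero_add]
    | [x] =>
      rw [starSym_one, hmul_single_one, hp_cons_cons, ZC_one, starSym_nil, hmul_nil_left,
        ZC_cons_cons, ZC_one, starSym_nil, hmul_nil_left, starSym_one, hmul_single_one,
        hp_nil_left, hp_nil_left, add_comm x c]
      simp only [Finsupp.mapDomain_single]
      abel
    | x :: y :: r' =>
      have hr : ((x + y) :: r').length ≤ n := by simp at h ⊢; omega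
      rw [starSym_cons_cons x y r', hmul_add_left, hmul_mapCons_single,
        IH ((x + y) :: r') hr c t, ZC_cons_cons x y r' (c :: t),
        ZC_cons_cons c x (y :: r') t, starSym_cons_cons x y r',
        ZC_cons_cons (c + x) y r' t, ZC_cons_cons c (x + y) r' t]
      simp only [hmul_add_left, Finsupp.mapDomain_add, ← add_assoc]
      rw [add_comm x c]
      abel

lemma Zp : ∀ (l r : Idx),
    (∑ j ∈ Finset.range (l.length + 1),
      ((-1 : ℚ) ^ j) • hmul (starSym ((l.take j).reverse ++ r))
        (Finsupp.single (l.drop j) 1)) = ZC r l := by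
  intro l
  induction l with
  | nil =>
    intro r
    simp only [List.length_nil, zero_add, Finset.range_one, Finset.sum_singleton,
      List.take_nil, List.reverse_nil, List.nil_append, List.drop_nil, pow_zero, one_smul]
    rw [hmul_nil_right, ZC_nil_right r.length r le_rfl]
  | cons c t IH =>
    intro r
    have hlen : (c :: t).length + 1 = (t.length + 1) + 1 := by simp
    rw [hlen, Finset.sum_range_succ']
    have hterm : ∀ i, ((-1 : ℚ) ^ (i + 1)) • hmul (starSym (((c :: t).take (i + 1)).reverse ++ r))
        (Finsupp.single ((c :: t).drop (i + 1)) 1) =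
        -(((-1 : ℚ) ^ i) • hmul (starSym ((t.take i).reverse ++ (c :: r)))
          (Finsupp.single (t.drop i) 1)) := by
      intro i
      rw [List.take_succ_cons, List.drop_succ_cons, List.reverse_cons, List.append_assoc,
        List.singleton_append, pow_succ, mul_comm, neg_one_mul, neg_smul]
    rw [Finset.sum_congr rfl fun i _ => hterm i, Finset.sum_neg_distrib, IH (c :: r)]
    simp only [List.take_zero, List.reverse_nil, List.nil_append, List.drop_zero, pow_zero,
      one_smul]
    rw [lemK r.length r le_rfl c t]
    abel

lemma hmul_sub_left (u v w : IdxAlg) : hmul (u - v) w = hmul u w - hmul v w := by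
  simp [hmul_eq]

lemma hmul_assoc_single (u w : Idx) (A : IdxAlg) :
    hmul (hmul (Finsupp.single u 1) A) (Finsupp.single w 1) =
      hmul (Finsupp.single u 1) (hmul A (Finsupp.single w 1)) := by
  induction A using Finsupp.induction_linear with
  | zero => simp [hmul_zero_left, hmul_zero_right]
  | add f g hf hg => rw [hmul_add_right, hmul_add_left, hf, hg, hmul_add_left, hmul_add_right]
  | single l b =>
    rw [hmul_single_single, hmul_single_single, one_mul, mul_one, hmul_smul_left,
      hmul_smul_right, hp_assoc (u.length + l.length + w.length) u l w le_rfl]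

/-- For indices `k`, `l = (l₁,…,l_s)` and a positive integer `a`,
`Σ_{j=0}^{s} (−1)^j [k // reverse(l₁,…,l_j); a] ∗ [l_{j+1},…,l_s] = [k,a,l]` in `ℐ`. -/
theorem alternating_antiHook_sum_eq_concat (AH : Idx → Idx → ℕ+ → IdxAlg)
    (hAH : IsAntiHook AH) (k l : Idx) (a : ℕ+) :
    ∑ j ∈ Finset.range (l.length + 1),
        ((-1 : ℚ) ^ j) • hmul (AH k (l.take j).reverse a) (Finsupp.single (l.drop j) 1) =
      Finsupp.single (k ++ [a] ++ l) 1 := by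
  obtain ⟨h1, h2, h3⟩ := hAH
  induction l generalizing k a with
  | nil =>
    simp only [List.length_nil, zero_add, Finset.range_one, Finset.sum_singleton,
      List.take_nil, List.reverse_nil, List.drop_nil, pow_zero, one_smul]
    rw [h1 k a, hmul_nil_right, List.append_nil]
  | cons c t IH =>
    rw [show (c :: t).length + 1 = (t.length + 1) + 1 from by simp, Finset.sum_range_succ']
    have hterm : ∀ i, ((-1 : ℚ) ^ (i + 1)) •
        hmul (AH k (((c :: t).take (i + 1)).reverse) a)
          (Finsupp.single ((c :: t).drop (i + 1)) 1) =
        ((-1 : ℚ) ^ i) • hmul (AH (k ++ [a]) ((t.take i).reverse) c)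
            (Finsupp.single (t.drop i) 1) -
          ((-1 : ℚ) ^ i) • hmul (hmul (Finsupp.single (k ++ [a]) 1)
            (starSym ((t.take i).reverse ++ [c]))) (Finsupp.single (t.drop i) 1) := by
      intro i
      rw [List.take_succ_cons, List.drop_succ_cons, List.reverse_cons]
      rw [eq_sub_of_add_eq (h3 k ((t.take i).reverse) a c), hmul_sub_left]
      rw [show ((-1 : ℚ)) ^ (i + 1) = -(-1 : ℚ) ^ i from by ring, neg_smul, smul_sub, neg_sub]
    rw [Finset.sum_congr rfl fun i _ => hterm i, Finset.sum_sub_distrib, IH (k ++ [a]) c]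
    have hsum2 : ∑ i ∈ Finset.range (t.length + 1), ((-1 : ℚ) ^ i) •
        hmul (hmul (Finsupp.single (k ++ [a]) 1) (starSym ((t.take i).reverse ++ [c])))
          (Finsupp.single (t.drop i) 1) =
        hmul (Finsupp.single (k ++ [a]) 1) (Finsupp.single (c :: t) 1) := by
      calc _ = ∑ i ∈ Finset.range (t.length + 1),
            hmul (Finsupp.single (k ++ [a]) 1) (((-1 : ℚ) ^ i) •
              hmul (starSym ((t.take i).reverse ++ [c])) (Finsupp.single (t.drop i) 1)) := by
            refine Finset.sum_congr rfl fun i _ => ?_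
            rw [hmul_assoc_single, hmul_smul_right]
        _ = hmul (Finsupp.single (k ++ [a]) 1)
            (∑ i ∈ Finset.range (t.length + 1), ((-1 : ℚ) ^ i) •
              hmul (starSym ((t.take i).reverse ++ [c])) (Finsupp.single (t.drop i) 1)) := by
            rw [hmul_sum_right]
        _ = hmul (Finsupp.single (k ++ [a]) 1) (ZC [c] t) := by rw [Zp t [c]]
        _ = _ := by rw [ZC_one, starSym_nil, hmul_nil_left, Finsupp.mapDomain_single]
    rw [hsum2]
    simp only [List.take_zero, List.reverse_nil, List.drop_zero, pow_zero, one_smul]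
    rw [h1 k a]
    rw [show (k ++ [a]) ++ [c] ++ t = k ++ [a] ++ (c :: t) from by simp]
    abel
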